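/- For any α with -1 < α ≤ 1 and any reals x₁, x₂: the R-conjunction Rα∧(x₁,x₂) = (1/(1+α))(x₁ + x₂ - √(x₁² + x₂² - 2αx₁x₂)) is nonnegative if and only if x₁ ≥ 0 and x₂ ≥ 0. -/
import Mathlib

theorem r_alpha_conjunction_nonneg_iff (α x₁ x₂ : ℝ) (hα₁ : -1 < α) (hα₂ : α ≤ 1) :
    0 ≤ (1 / (1 + α)) * (x₁ + x₂ - Real.sqrt (x₁ ^ 2 + x₂ ^ 2 - 2 * α * x₁ * x₂)) ↔
      0 ≤ x₁ ∧ 0 ≤ x₂ := by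
  have hpos : (0:ℝ) < 1 + α := by linarith
  have hE : 0 ≤ x₁ ^ 2 + x₂ ^ 2 - 2 * α * x₁ * x₂ := by
    nlinarith [mul_nonneg (by linarith : (0:ℝ) ≤ 1 - α) (sq_nonneg (x₁ + x₂)),
      mul_nonneg (by linarith : (0:ℝ) ≤ 1 + α) (sq_nonneg (x₁ - x₂))]
  have hinv : (0:ℝ) < 1 / (1 + α) := by positivity
  constructor
  · intro h
    have ht : 0 ≤ x₁ + x₂ - Real.sqrt (x₁ ^ 2 + x₂ ^ 2 - 2 * α * x₁ * x₂) :=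
      nonneg_of_mul_nonneg_right (by linarith [h]) hinv
    have hsn := Real.sqrt_nonneg (x₁ ^ 2 + x₂ ^ 2 - 2 * α * x₁ * x₂)
    have hsum : 0 ≤ x₁ + x₂ := by linarith
    have hsq := Real.sq_sqrt hE
    have hle : x₁ ^ 2 + x₂ ^ 2 - 2 * α * x₁ * x₂ ≤ (x₁ + x₂) ^ 2 := by
      nlinarith [hsq, hsn]
    have hprod : 0 ≤ x₁ * x₂ := by nlinarith
    constructor <;> nlinarith [sq_nonneg x₁, sq_nonneg x₂]
  · rintro ⟨h1, h2⟩
    have hle : (x₁ ^ 2 + x₂ ^ 2 - 2 * α * x₁ * x₂) ≤ (x₁ + x₂) ^ 2 := by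
      nlinarith [mul_nonneg (le_of_lt hpos) (mul_nonneg h1 h2)]
    have hs : Real.sqrt (x₁ ^ 2 + x₂ ^ 2 - 2 * α * x₁ * x₂) ≤ x₁ + x₂ := by
      calc Real.sqrt (x₁ ^ 2 + x₂ ^ 2 - 2 * α * x₁ * x₂) ≤ Real.sqrt ((x₁ + x₂) ^ 2) :=
            Real.sqrt_le_sqrt hle
        _ = x₁ + x₂ := Real.sqrt_sq (by linarith)
    exact mul_nonneg (le_of_lt hinv) (by linarith)
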